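/- Let p = [b_1^{a_1} ⋯ b_r^{a_r}] (b_1 ≥ ⋯ ≥ b_r) be an orthogonal partition of 2n in which every b_i is even (so every a_i is even). Then n* = 0 and, with P := [p_1 p_1], one has P = p^t, the partition p^t is a special orthogonal partition of 2n, and P^{SO_{2n}} = (p^t)_{SO_{2n}} = p^t. -/

import Mathlib

namespace JiangWF

/-- `sCount p i` : the number of parts of `p` that are `≥ i`. -/
def sCount (p : Multiset ℕ) (i : ℕ) : ℕ := (p.filter (fun a => i ≤ a)).card

/-- `rCount p i` : the number of parts of `p` equal to `i`. -/
def rCount (p : Multiset ℕ) (i : ℕ) : ℕ := p.count i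

/-- The largest part of `p` (`0` for the empty partition). -/
def maxPart (p : Multiset ℕ) : ℕ := p.sup

/-- The smallest part of `p` (`0` for the empty partition). -/
noncomputable def minPart (p : Multiset ℕ) : ℕ := sInf {a : ℕ | a ∈ p}

/-- The transpose partition: its `i`-th part is `sCount p i`, for `1 ≤ i ≤ maxPart p`. -/
def transpose (p : Multiset ℕ) : Multiset ℕ :=
  (Multiset.range (maxPart p)).map fun i => sCount p (i + 1)

/-- The sum of the `m` largest parts of `p`. -/
def topSum (p : Multiset ℕ) (m : ℕ) : ℕ :=
  ∑ i ∈ Finset.Icc 1 p.sum, min m (sCount p i)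

/-- Dominance order: `domLE p q` means `p ≤ q`. -/
def domLE (p q : Multiset ℕ) : Prop := ∀ m, topSum p m ≤ topSum q m

/-- `p` is a partition of `N`: all parts positive, summing to `N`. -/
def IsPartitionOf (p : Multiset ℕ) (N : ℕ) : Prop := (∀ a ∈ p, 0 < a) ∧ p.sum = N

/-- Symplectic partition: every odd part occurs with even multiplicity. -/
def IsSymplectic (p : Multiset ℕ) : Prop := ∀ a, a % 2 = 1 → Even (p.count a)

/-- Orthogonal partition: every even part occurs with even multiplicity. -/
def IsOrthogonal (p : Multiset ℕ) : Prop := ∀ a, a % 2 = 0 → Even (p.count a)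

/-- `p^-`: decrease the smallest part by one (deleting it if it becomes `0`). -/
noncomputable def pMinus (p : Multiset ℕ) : Multiset ℕ :=
  if minPart p ≤ 1 then p.erase (minPart p)
  else (minPart p - 1) ::ₘ p.erase (minPart p)

/-- `p^+`: increase the largest part by one. -/
def pPlus (p : Multiset ℕ) : Multiset ℕ := (maxPart p + 1) ::ₘ p.erase (maxPart p)

/-- `p^{+-}`: increase the largest part by one and decrease the smallest by one. -/
noncomputable def pPM (p : Multiset ℕ) : Multiset ℕ := pMinus (pPlus p)

/-- `p₁ = [⌊b_1/2⌋^{a_1} ⋯ ⌊b_r/2⌋^{a_r}]^t` (discarding zero entries before transposing). -/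
def pOne (p : Multiset ℕ) : Multiset ℕ :=
  transpose ((p.map fun b => b / 2).filter fun x => 0 < x)

/-- `Σ_{i : b_i odd} a_i`: the number of odd parts of `p`. -/
def oddMult (p : Multiset ℕ) : ℕ := (p.filter fun a => a % 2 = 1).card

/-- `n* = ⌊(Σ_{i : b_i odd} a_i)/2⌋`. -/
def nStar (p : Multiset ℕ) : ℕ := oddMult p / 2

/-- Append an extra part `m` to `q`, omitted if `m = 0`. -/
def addPart (m : ℕ) (q : Multiset ℕ) : Multiset ℕ := if m = 0 then q else m ::ₘ q

/-- `c` is the `Sp`-collapse of `p`: the maximal symplectic partition `≤ p` in dominance. -/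
def IsSpCollapse (p c : Multiset ℕ) : Prop :=
  IsPartitionOf c p.sum ∧ IsSymplectic c ∧ domLE c p ∧
    ∀ c', IsPartitionOf c' p.sum → IsSymplectic c' → domLE c' p → domLE c' c

/-- `c` is the `SO`-collapse of `p`: the maximal orthogonal partition `≤ p` in dominance. -/
def IsSOCollapse (p c : Multiset ℕ) : Prop :=
  IsPartitionOf c p.sum ∧ IsOrthogonal c ∧ domLE c p ∧
    ∀ c', IsPartitionOf c' p.sum → IsOrthogonal c' → domLE c' p → domLE c' c

/-- `e` is the `Sp`-expansion of `p`: the minimal special symplectic partition `≥ p`. -/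
def IsSpExpansion (p e : Multiset ℕ) : Prop :=
  IsPartitionOf e p.sum ∧ IsSymplectic e ∧ IsSymplectic (transpose e) ∧ domLE p e ∧
    ∀ e', IsPartitionOf e' p.sum → IsSymplectic e' → IsSymplectic (transpose e') →
      domLE p e' → domLE e e'

/-- `e` is the `SO_{2n+1}`-expansion of `p`: the minimal special orthogonal partition `≥ p`
(odd case: special means the transpose is orthogonal). -/
def IsSOOddExpansion (p e : Multiset ℕ) : Prop :=
  IsPartitionOf e p.sum ∧ IsOrthogonal e ∧ IsOrthogonal (transpose e) ∧ domLE p e ∧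
    ∀ e', IsPartitionOf e' p.sum → IsOrthogonal e' → IsOrthogonal (transpose e') →
      domLE p e' → domLE e e'

/-- `e` is the `SO_{2n}`-expansion of `p`: the minimal special orthogonal partition `≥ p`
(even case: special means the transpose is symplectic). -/
def IsSOEvenExpansion (p e : Multiset ℕ) : Prop :=
  IsPartitionOf e p.sum ∧ IsOrthogonal e ∧ IsSymplectic (transpose e) ∧ domLE p e ∧
    ∀ e', IsPartitionOf e' p.sum → IsOrthogonal e' → IsSymplectic (transpose e') →
      domLE p e' → domLE e e'

/-- `dim_C(q)` for a symplectic partition `q` of `2k`: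
`2k² + k − (1/2)Σ s_i(q)² − (1/2)Σ_{i odd} r_i(q)` (note `2k² + k = (|q|² + |q|)/2`). -/
def dimC (p : Multiset ℕ) : ℚ :=
  ((p.sum : ℚ) ^ 2 + (p.sum : ℚ)) / 2
    - (∑ i ∈ Finset.Icc 1 p.sum, (sCount p i : ℚ) ^ 2) / 2
    - (∑ i ∈ Finset.Icc 1 p.sum, if i % 2 = 1 then (rCount p i : ℚ) else 0) / 2

/-- `dim_B(q)` for an orthogonal partition `q` of `2k+1`:
`2k² + k − (1/2)Σ s_i(q)² + (1/2)Σ_{i odd} r_i(q)` (note `2k² + k = (|q|² − |q|)/2`). -/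
def dimB (p : Multiset ℕ) : ℚ :=
  ((p.sum : ℚ) ^ 2 - (p.sum : ℚ)) / 2
    - (∑ i ∈ Finset.Icc 1 p.sum, (sCount p i : ℚ) ^ 2) / 2
    + (∑ i ∈ Finset.Icc 1 p.sum, if i % 2 = 1 then (rCount p i : ℚ) else 0) / 2

/-- `dim_D(q)` for an orthogonal partition `q` of `2k`:
`2k² − k − (1/2)Σ s_i(q)² + (1/2)Σ_{i odd} r_i(q)` (note `2k² − k = (|q|² − |q|)/2`). -/
def dimD (p : Multiset ℕ) : ℚ :=
  ((p.sum : ℚ) ^ 2 - (p.sum : ℚ)) / 2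
    - (∑ i ∈ Finset.Icc 1 p.sum, (sCount p i : ℚ) ^ 2) / 2
    + (∑ i ∈ Finset.Icc 1 p.sum, if i % 2 = 1 then (rCount p i : ℚ) else 0) / 2



section Aux

lemma sCount_cons (a : ℕ) (s : Multiset ℕ) (i : ℕ) :
    sCount (a ::ₘ s) i = sCount s i + if i ≤ a then 1 else 0 := by
  simp only [sCount, Multiset.filter_cons]
  split <;> simp [add_comm]

lemma sCount_anti (s : Multiset ℕ) {i j : ℕ} (h : i ≤ j) : sCount s j ≤ sCount s i :=
  Multiset.card_le_card (Multiset.monotone_filter_right s (fun a hj => le_trans h hj))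

lemma sCount_le_card (s : Multiset ℕ) (i : ℕ) : sCount s i ≤ Multiset.card s :=
  Multiset.card_le_card (Multiset.filter_le _ s)

lemma sCount_eq_zero (s : Multiset ℕ) {i : ℕ} (h : ∀ a ∈ s, a < i) : sCount s i = 0 := by
  simp only [sCount, Multiset.card_eq_zero]
  rw [Multiset.filter_eq_nil]
  intro a ha hle
  have := h a ha
  omega

lemma sCount_eq_count_add (s : Multiset ℕ) (a : ℕ) :
    sCount s a = s.count a + sCount s (a + 1) := by
  induction s using Multiset.induction with
  | empty => rfl
  | cons b s ih =>
    rw [sCount_cons, sCount_cons, Multiset.count_cons, ih]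
    split_ifs <;> omega

lemma le_maxPart {s : Multiset ℕ} {a : ℕ} (h : a ∈ s) : a ≤ maxPart s := Multiset.le_sup h

lemma maxPart_mem {s : Multiset ℕ} (h : s ≠ 0) : maxPart s ∈ s := by
  induction s using Multiset.induction with
  | empty => exact absurd rfl h
  | cons b s ih =>
    by_cases hs : s = 0
    · subst hs; simp [maxPart]
    · have hm := ih hs
      unfold maxPart at *
      rw [Multiset.sup_cons]
      rcases le_total b s.sup with hle | hle
      · rw [sup_eq_right.mpr hle]
        exact Multiset.mem_cons_of_mem hm
      · rw [sup_eq_left.mpr hle]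
        exact Multiset.mem_cons_self b s

lemma sum_sCount_of_le (s : Multiset ℕ) (M : ℕ) (h : ∀ a ∈ s, a ≤ M) :
    ∑ i ∈ Finset.range M, sCount s (i + 1) = s.sum := by
  induction s using Multiset.induction with
  | empty => simp [sCount]
  | cons b s ih =>
    have hb : b ≤ M := h b (Multiset.mem_cons_self b s)
    have ihs := ih (fun a ha => h a (Multiset.mem_cons_of_mem ha))
    simp only [sCount_cons, Multiset.sum_cons]
    rw [Finset.sum_add_distrib, ihs]
    have hfil : (Finset.range M).filter (fun i => i + 1 ≤ b) = Finset.range b := by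
      ext i
      simp only [Finset.mem_filter, Finset.mem_range]
      omega
    rw [← Finset.sum_filter, hfil]
    simp [add_comm]

lemma transpose_sum (p : Multiset ℕ) : (transpose p).sum = p.sum := by
  have h : (transpose p).sum = ∑ i ∈ Finset.range (maxPart p), sCount p (i + 1) := rfl
  rw [h, sum_sCount_of_le p _ (fun a ha => le_maxPart ha)]

lemma transpose_pos (p : Multiset ℕ) : ∀ x ∈ transpose p, 0 < x := by
  intro x hx
  rw [transpose, Multiset.mem_map] at hx
  obtain ⟨i, hi, rfl⟩ := hx
  rw [Multiset.mem_range] at hi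
  have hne : p ≠ 0 := by
    intro h
    rw [h] at hi
    simp [maxPart] at hi
  have hmem := maxPart_mem hne
  have h1 : maxPart p ∈ p.filter (fun a => i + 1 ≤ a) :=
    Multiset.mem_filter.mpr ⟨hmem, by omega⟩
  have h2 : 0 < (p.filter (fun a => i + 1 ≤ a)).card :=
    Multiset.card_pos_iff_exists_mem.mpr ⟨_, h1⟩
  exact h2

lemma maxPart_map_div2 (p : Multiset ℕ) : maxPart (p.map (· / 2)) = maxPart p / 2 := by
  induction p using Multiset.induction with
  | empty => rfl
  | cons b s ih =>
    unfold maxPart at *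
    rw [Multiset.map_cons, Multiset.sup_cons, Multiset.sup_cons, ih]
    rcases le_total b s.sup with h | h
    · rw [sup_eq_right.mpr (Nat.div_le_div_right h), sup_eq_right.mpr h]
    · rw [sup_eq_left.mpr (Nat.div_le_div_right h), sup_eq_left.mpr h]

lemma sCount_map_div2 (p : Multiset ℕ) (k : ℕ) :
    sCount (p.map (· / 2)) (k + 1) = sCount p (2 * k + 2) := by
  unfold sCount
  rw [Multiset.filter_map, Multiset.card_map]
  congr 1
  apply Multiset.filter_congr
  intro b _
  show (k + 1 ≤ b / 2) ↔ (2 * k + 2 ≤ b)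
  omega

lemma sCount_odd_eq (p : Multiset ℕ) (heven : ∀ a ∈ p, a % 2 = 0) (k : ℕ) :
    sCount p (2 * k + 1) = sCount p (2 * k + 2) := by
  unfold sCount
  congr 1
  apply Multiset.filter_congr
  intro b hb
  have := heven b hb
  omega

lemma map_range_two_mul (m : ℕ) (f g : ℕ → ℕ)
    (h : ∀ k < m, f (2 * k) = g k ∧ f (2 * k + 1) = g k) :
    (Multiset.range (2 * m)).map f = (Multiset.range m).map g + (Multiset.range m).map g := by
  induction m with
  | zero => simp
  | succ m ih =>
    have h2 : 2 * (m + 1) = (2 * m + 1) + 1 := by ring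
    rw [h2, Multiset.range_succ, Multiset.range_succ, Multiset.range_succ,
      Multiset.map_cons, Multiset.map_cons, Multiset.map_cons,
      ih (fun k hk => h k (by omega))]
    obtain ⟨h1, h2'⟩ := h m (by omega)
    rw [h1, h2']
    simp only [← Multiset.singleton_add]
    abel

lemma pOne_eq (p : Multiset ℕ) (hpos : ∀ a ∈ p, 0 < a) (heven : ∀ a ∈ p, a % 2 = 0) :
    pOne p = transpose (p.map (· / 2)) := by
  unfold pOne
  congr 1
  rw [Multiset.filter_eq_self]
  intro x hx
  rw [Multiset.mem_map] at hx
  obtain ⟨b, hb, rfl⟩ := hx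
  have h1 := hpos b hb
  have h2 := heven b hb
  omega

lemma double_transpose_key (p : Multiset ℕ) (hpos : ∀ a ∈ p, 0 < a)
    (heven : ∀ a ∈ p, a % 2 = 0) :
    pOne p + pOne p = transpose p := by
  rw [pOne_eq p hpos heven]
  set q := p.map (· / 2) with hq
  have hmax : maxPart p = 2 * maxPart q := by
    have h1 : maxPart q = maxPart p / 2 := maxPart_map_div2 p
    by_cases hp0 : p = 0
    · subst hp0
      simp [hq, maxPart]
    · have h2 := heven _ (maxPart_mem hp0)
      omega
  rw [transpose, transpose, hmax]
  symm
  apply map_range_two_mul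
  intro k hk
  constructor
  · show sCount p (2 * k + 1) = sCount q (k + 1)
    rw [sCount_odd_eq p heven k, sCount_map_div2 p k]
  · show sCount p (2 * k + 1 + 1) = sCount q (k + 1)
    rw [show 2 * k + 1 + 1 = 2 * k + 2 by ring, sCount_map_div2 p k]

lemma isOrthogonal_double (t : Multiset ℕ) : IsOrthogonal (t + t) := by
  intro a _
  rw [Multiset.count_add]
  exact ⟨t.count a, rfl⟩

lemma symplectic_transpose_double (t : Multiset ℕ) : IsSymplectic (transpose (t + t)) := by
  intro a ha
  rw [Multiset.count_eq_zero_of_notMem]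
  · exact Even.zero
  intro hmem
  rw [transpose, Multiset.mem_map] at hmem
  obtain ⟨i, _, hi⟩ := hmem
  have hdouble : sCount (t + t) (i + 1) = sCount t (i + 1) + sCount t (i + 1) := by
    unfold sCount
    rw [Multiset.filter_add, Multiset.card_add]
  omega

lemma mycard_le_sum (s : Multiset ℕ) (hpos : ∀ a ∈ s, 0 < a) : Multiset.card s ≤ s.sum := by
  induction s using Multiset.induction with
  | empty => simp
  | cons b s ih =>
    have h1 := hpos b (Multiset.mem_cons_self b s)
    have h2 := ih (fun a ha => hpos a (Multiset.mem_cons_of_mem ha))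
    simp only [Multiset.card_cons, Multiset.sum_cons]
    omega

lemma topSum_succ (p : Multiset ℕ) (m : ℕ) :
    topSum p (m + 1) = topSum p m
      + ((Finset.Icc 1 p.sum).filter (fun i => m + 1 ≤ sCount p i)).card := by
  unfold topSum
  have h : ∀ i, min (m + 1) (sCount p i)
      = min m (sCount p i) + (if m + 1 ≤ sCount p i then 1 else 0) := by
    intro i
    split_ifs <;> omega
  simp_rw [h]
  rw [Finset.sum_add_distrib, ← Finset.sum_filter]
  simp

lemma le_G_iff (p : Multiset ℕ) {i m : ℕ}
    (hi1 : 1 ≤ i) (hiS : i ≤ p.sum) :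
    i ≤ ((Finset.Icc 1 p.sum).filter (fun j => m ≤ sCount p j)).card ↔ m ≤ sCount p i := by
  constructor
  · intro h
    by_contra hlt
    push_neg at hlt
    have hsub : (Finset.Icc 1 p.sum).filter (fun j => m ≤ sCount p j) ⊆ Finset.Icc 1 (i - 1) := by
      intro j hj
      rw [Finset.mem_filter, Finset.mem_Icc] at hj
      rw [Finset.mem_Icc]
      obtain ⟨⟨hj1, hj2⟩, hjm⟩ := hj
      refine ⟨hj1, ?_⟩
      by_contra hji
      have hanti := sCount_anti p (show i ≤ j by omega)
      omega
    have hc := Finset.card_le_card hsub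
    rw [Nat.card_Icc] at hc
    omega
  · intro h
    have hsub : Finset.Icc 1 i ⊆ (Finset.Icc 1 p.sum).filter (fun j => m ≤ sCount p j) := by
      intro j hj
      rw [Finset.mem_Icc] at hj
      rw [Finset.mem_filter, Finset.mem_Icc]
      exact ⟨⟨hj.1, by omega⟩, le_trans h (sCount_anti p hj.2)⟩
    have hc := Finset.card_le_card hsub
    rw [Nat.card_Icc] at hc
    omega

lemma sCount_eq_card_G (p : Multiset ℕ) (hpos : ∀ a ∈ p, 0 < a) (S : ℕ) (hS : p.sum = S)
    {i : ℕ} (hi1 : 1 ≤ i) (hiS : i ≤ S) :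
    sCount p i = ((Finset.Icc 1 S).filter
      (fun m => i ≤ ((Finset.Icc 1 S).filter (fun j => m ≤ sCount p j)).card)).card := by
  subst hS
  have hsle : sCount p i ≤ p.sum := le_trans (sCount_le_card p i) (mycard_le_sum p hpos)
  have hfe : (Finset.Icc 1 p.sum).filter
      (fun m => i ≤ ((Finset.Icc 1 p.sum).filter (fun j => m ≤ sCount p j)).card)
      = Finset.Icc 1 (sCount p i) := by
    ext m
    rw [Finset.mem_filter, Finset.mem_Icc, Finset.mem_Icc, le_G_iff p hi1 hiS]
    omega
  rw [hfe, Nat.card_Icc]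
  omega

lemma domLE_antisymm {p q : Multiset ℕ} (hp : ∀ a ∈ p, 0 < a) (hq : ∀ a ∈ q, 0 < a)
    (hsum : p.sum = q.sum) (h1 : domLE p q) (h2 : domLE q p) : p = q := by
  have htop : ∀ m, topSum p m = topSum q m := fun m => le_antisymm (h1 m) (h2 m)
  have hG : ∀ m, 1 ≤ m → ((Finset.Icc 1 p.sum).filter (fun i => m ≤ sCount p i)).card
      = ((Finset.Icc 1 p.sum).filter (fun i => m ≤ sCount q i)).card := by
    intro m hm
    obtain ⟨m', rfl⟩ : ∃ m', m = m' + 1 := ⟨m - 1, by omega⟩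
    have e1 := topSum_succ p m'
    have e2 := topSum_succ q m'
    rw [← hsum] at e2
    have t1 := htop m'
    have t2 := htop (m' + 1)
    omega
  have hs : ∀ i, 1 ≤ i → sCount p i = sCount q i := by
    intro i hi1
    by_cases hiS : i ≤ p.sum
    · rw [sCount_eq_card_G p hp p.sum rfl hi1 hiS,
        sCount_eq_card_G q hq p.sum hsum.symm hi1 hiS]
      congr 1
      apply Finset.filter_congr
      intro m hm
      rw [Finset.mem_Icc] at hm
      rw [hG m hm.1]
    · push_neg at hiS
      rw [sCount_eq_zero p (fun a ha => by
          have := Multiset.le_sum_of_mem ha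
          omega),
        sCount_eq_zero q (fun a ha => by
          have := Multiset.le_sum_of_mem ha
          omega)]
  apply Multiset.ext.mpr
  intro a
  rcases Nat.eq_zero_or_pos a with rfl | ha
  · rw [Multiset.count_eq_zero_of_notMem (fun h => absurd (hp 0 h) (lt_irrefl 0)),
      Multiset.count_eq_zero_of_notMem (fun h => absurd (hq 0 h) (lt_irrefl 0))]
  · have e1 := sCount_eq_count_add p a
    have e2 := sCount_eq_count_add q a
    have h3 := hs a ha
    have h4 := hs (a + 1) (by omega)
    omega

end Aux

/-- `p` an orthogonal partition of `2n` all of whose parts are even.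
Then `n* = 0`, `P = [p₁ p₁]` equals `p^t`, `p^t` is a special orthogonal partition of `2n`
(orthogonal with symplectic transpose), and `P^{SO_{2n}} = (p^t)_{SO_{2n}} = p^t`. -/
theorem even_orthogonal_special (n : ℕ) (p : Multiset ℕ)
    (hp : IsPartitionOf p (2 * n)) (horth : IsOrthogonal p)
    (heven : ∀ a ∈ p, a % 2 = 0) :
    nStar p = 0 ∧ pOne p + pOne p = transpose p ∧
      IsPartitionOf (transpose p) (2 * n) ∧ IsOrthogonal (transpose p) ∧
      IsSymplectic (transpose (transpose p)) ∧
      (∀ e : Multiset ℕ, IsSOEvenExpansion (pOne p + pOne p) e → e = transpose p) ∧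
      (∀ c : Multiset ℕ, IsSOCollapse (transpose p) c → c = transpose p) := by
  have hpos := hp.1
  have hsum := hp.2
  have hB : pOne p + pOne p = transpose p := double_transpose_key p hpos heven
  have htpos := transpose_pos p
  have htsum : (transpose p).sum = 2 * n := by rw [transpose_sum, hsum]
  have htP : IsPartitionOf (transpose p) (2 * n) := ⟨htpos, htsum⟩
  have horthT : IsOrthogonal (transpose p) := by
    rw [← hB]; exact isOrthogonal_double _
  have hsymp : IsSymplectic (transpose (transpose p)) := by
    rw [← hB]; exact symplectic_transpose_double _
  refine ⟨?_, hB, htP, horthT, hsymp, ?_, ?_⟩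
  · have hfil : (p.filter fun a => a % 2 = 1) = 0 := by
      rw [Multiset.filter_eq_nil]
      intro a ha hodd
      have := heven a ha
      omega
    unfold nStar oddMult
    rw [hfil]
    rfl
  · intro e he
    obtain ⟨hePart, heOrth, heSymp, heDom, heMin⟩ := he
    rw [hB] at hePart heDom heMin
    have hd1 : domLE e (transpose p) :=
      heMin (transpose p) ⟨htpos, rfl⟩ horthT hsymp (fun m => le_refl _)
    exact domLE_antisymm hePart.1 htpos hePart.2 hd1 heDom
  · intro c hc
    obtain ⟨hcPart, hcOrth, hcDom, hcMax⟩ := hc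
    have hd : domLE (transpose p) c :=
      hcMax (transpose p) ⟨htpos, rfl⟩ horthT (fun m => le_refl _)
    exact domLE_antisymm hcPart.1 htpos hcPart.2 hcDom hd


end JiangWF
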